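/- For a single robot moving at unit speed in a metric space, there exists a patrol schedule of latency at most L for the sites in P if and only if there exists a closed tour (cyclic ordering of the sites of P) of total length at most L. -/

import Mathlib

open Finset

lemma glue_path {X : Type*} [MetricSpace X]
    (hgeo : ∀ x y : X, ∃ g : ℝ → X, LipschitzWith 1 g ∧ g 0 = x ∧ g (dist x y) = y)
    (p : ℕ → X)
    (hub : ∀ t : ℝ, ∃ m : ℕ, t < ∑ m' ∈ range m, dist (p m') (p (m' + 1))) :
    ∃ F : ℝ → X, LipschitzWith 1 F ∧
      ∀ j : ℕ, F (∑ m ∈ range j, dist (p m) (p (m + 1))) = p j := by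
  set e : ℕ → ℝ := fun j => dist (p j) (p (j + 1)) with he
  set c : ℕ → ℝ := fun j => ∑ m ∈ range j, e m with hc
  have hcsucc : ∀ j, c (j + 1) = c j + e j := fun j => sum_range_succ e j
  have hmono : Monotone c := monotone_nat_of_le_succ fun j => by
    rw [hcsucc]; have := dist_nonneg (x := p j) (y := p (j + 1)); simp [he]
  have hc0 : c 0 = 0 := by simp [hc]
  have hc0le : ∀ j, 0 ≤ c j := fun j => hc0 ▸ hmono (Nat.zero_le j)
  choose g hg1 hg2 hg3 using fun j => hgeo (p j) (p (j + 1))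
  have hchain : ∀ i j : ℕ, i ≤ j → dist (p i) (p j) ≤ c j - c i := by
    intro i j hij
    induction j, hij using Nat.le_induction with
    | base => simp
    | succ j hij ih =>
      calc dist (p i) (p (j + 1)) ≤ dist (p i) (p j) + dist (p j) (p (j + 1)) :=
            dist_triangle _ _ _
        _ ≤ c j - c i + e j := by linarith
        _ = c (j + 1) - c i := by rw [hcsucc]; ring
  have hN : ∀ t : ℝ, ∃ m : ℕ, t < c m := hub
  set N : ℝ → ℕ := fun t => Nat.find (hN t) with hNdef
  have hNspec : ∀ t, t < c (N t) := fun t => Nat.find_spec (hN t)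
  have hNmin : ∀ t, ∀ m < N t, c m ≤ t := fun t m hm =>
    le_of_not_gt (Nat.find_min (hN t) hm)
  have hNpos : ∀ t : ℝ, 0 ≤ t → 1 ≤ N t := by
    intro t ht
    rcases Nat.eq_zero_or_pos (N t) with h | h
    · have := hNspec t; rw [h, hc0] at this; linarith
    · exact h
  set F0 : ℝ → X := fun t => g (N t - 1) (t - c (N t - 1)) with hF0
  have hkey : ∀ t : ℝ, 0 ≤ t → ∀ j, j = N t - 1 →
      c j ≤ t ∧ t ≤ c (j + 1) ∧ dist (F0 t) (p j) ≤ t - c j ∧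
      dist (F0 t) (p (j + 1)) ≤ c (j + 1) - t := by
    intro t ht j hj
    have hNt := hNpos t ht
    have h1 : j + 1 = N t := by omega
    have hcj : c j ≤ t := hNmin t j (by omega)
    have hct : t ≤ c (j + 1) := by rw [h1]; exact (hNspec t).le
    have hFt : F0 t = g j (t - c j) := by simp only [hF0, ← hj]
    refine ⟨hcj, hct, ?_, ?_⟩
    · rw [hFt]
      calc dist (g j (t - c j)) (p j) = dist (g j (t - c j)) (g j 0) := by rw [hg2]
        _ ≤ 1 * dist (t - c j) (0 : ℝ) := (hg1 j).dist_le_mul _ _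
        _ = |t - c j| := by rw [one_mul, Real.dist_eq, sub_zero]
        _ = t - c j := abs_of_nonneg (by linarith)
    · rw [hFt]
      calc dist (g j (t - c j)) (p (j + 1)) = dist (g j (t - c j)) (g j (e j)) := by
            rw [hg3]
        _ ≤ 1 * dist (t - c j) (e j) := (hg1 j).dist_le_mul _ _
        _ = |t - c j - e j| := by rw [one_mul, Real.dist_eq]
        _ = c (j + 1) - t := by
            rw [abs_of_nonpos (by have := hcsucc j; linarith)]
            have := hcsucc j; linarith
  have hH : ∀ s t : ℝ, 0 ≤ s → s ≤ t → dist (F0 s) (F0 t) ≤ t - s := by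
    intro s t hs hst
    have ht : 0 ≤ t := hs.trans hst
    obtain ⟨hcas, hsb, hdsa, hdsb⟩ := hkey s hs _ rfl
    obtain ⟨hcbt, htb, hdta, hdtb⟩ := hkey t ht _ rfl
    have hab : N s - 1 ≤ N t - 1 := by
      have : N s ≤ N t := Nat.find_mono (fun m hm => lt_of_le_of_lt hst hm)
      omega
    rcases eq_or_lt_of_le hab with h | h
    · have hFs : F0 s = g (N s - 1) (s - c (N s - 1)) := by simp only [hF0]
      have hFt : F0 t = g (N s - 1) (t - c (N s - 1)) := by simp only [hF0, ← h]
      rw [hFs, hFt]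
      calc dist _ _ ≤ 1 * dist (s - c (N s - 1)) (t - c (N s - 1)) :=
            (hg1 _).dist_le_mul _ _
        _ = |s - t| := by rw [one_mul, Real.dist_eq]; ring_nf
        _ = t - s := by rw [abs_sub_comm]; exact abs_of_nonneg (by linarith)
    · have h1 : N s - 1 + 1 ≤ N t - 1 := h
      have hch := hchain (N s - 1 + 1) (N t - 1) h1
      have hcc : c (N s - 1 + 1) ≤ c (N t - 1) := hmono h1
      calc dist (F0 s) (F0 t)
          ≤ dist (F0 s) (p (N s - 1 + 1)) + dist (p (N s - 1 + 1)) (p (N t - 1)) +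
            dist (p (N t - 1)) (F0 t) := dist_triangle4 _ _ _ _
        _ ≤ (c (N s - 1 + 1) - s) + (c (N t - 1) - c (N s - 1 + 1)) + (t - c (N t - 1)) := by
            have hdta' : dist (p (N t - 1)) (F0 t) ≤ t - c (N t - 1) := by
              rw [dist_comm]; exact hdta
            linarith
        _ = t - s := by ring
  refine ⟨fun x => F0 (max x 0), ?_, ?_⟩
  · apply LipschitzWith.of_dist_le_mul
    intro x y
    rw [NNReal.coe_one, one_mul]
    rcases le_total (max x 0) (max y 0) with h | h
    · calc dist (F0 (max x 0)) (F0 (max y 0)) ≤ max y 0 - max x 0 :=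
            hH _ _ (le_max_right _ _) h
        _ ≤ |y ⊔ 0 - x ⊔ 0| := le_abs_self _
        _ ≤ |y - x| := abs_max_sub_max_le_abs _ _ _
        _ = dist x y := by rw [Real.dist_eq, abs_sub_comm]
    · calc dist (F0 (max x 0)) (F0 (max y 0)) = dist (F0 (max y 0)) (F0 (max x 0)) :=
            dist_comm _ _
        _ ≤ max x 0 - max y 0 := hH _ _ (le_max_right _ _) h
        _ ≤ |x ⊔ 0 - y ⊔ 0| := le_abs_self _
        _ ≤ |x - y| := abs_max_sub_max_le_abs _ _ _
        _ = dist x y := Real.dist_eq x y ▸ rfl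
  · intro j
    have hcge : 0 ≤ c j := hc0le j
    show F0 (max (c j) 0) = p j
    rw [max_eq_left hcge]
    obtain ⟨h1, h2, h3, h4⟩ := hkey (c j) hcge _ rfl
    have hjm : j ≤ N (c j) - 1 := by
      by_contra hcon
      push_neg at hcon
      have : c (N (c j) - 1 + 1) ≤ c j := hmono (by omega)
      have h5 := hNspec (c j)
      have h6 : N (c j) - 1 + 1 = N (c j) := by have := hNpos (c j) hcge; omega
      rw [h6] at this; linarith
    have hceq : c (N (c j) - 1) = c j := le_antisymm h1 (hmono hjm)
    have hFm : F0 (c j) = g (N (c j) - 1) (c j - c (N (c j) - 1)) := by simp only [hF0]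
    rw [hFm, hceq, sub_self, hg2]
    have hd := hchain j (N (c j) - 1) hjm
    rw [hceq] at hd
    exact (dist_le_zero.mp (by linarith)).symm

open Fin.NatCast in
lemma fwd_dir {X : Type*} [MetricSpace X] (n : ℕ) (sites : Fin (n + 1) → X)
    (L : ℝ) (hL : 0 ≤ L) (f : ℝ → X) (hf : LipschitzWith 1 f)
    (hvis : ∀ (i : Fin (n + 1)) (t : ℝ), 0 ≤ t → ∃ u ∈ Set.Icc t (t + L), f u = sites i) :
    ∃ σ : Equiv.Perm (Fin (n + 1)),
      ∑ i : Fin (n + 1), dist (sites (σ i)) (sites (σ (i + 1))) ≤ L := by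
  have hdist : ∀ s t : ℝ, dist (f s) (f t) ≤ |s - t| := by
    intro s t
    have := hf.dist_le_mul s t
    rwa [NNReal.coe_one, one_mul, Real.dist_eq] at this
  set S : Fin (n + 1) → Set ℝ := fun i => Set.Icc 0 L ∩ f ⁻¹' {sites i} with hS
  have hSne : ∀ i, (S i).Nonempty := by
    intro i
    obtain ⟨u, hu, hfu⟩ := hvis i 0 le_rfl
    rw [zero_add] at hu
    exact ⟨u, hu, hfu⟩
  have hSc : ∀ i, IsClosed (S i) :=
    fun i => isClosed_Icc.inter (isClosed_singleton.preimage hf.continuous)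
  have hbdd : ∀ i, BddAbove (S i) := fun i => bddAbove_Icc.mono Set.inter_subset_left
  set ℓ : Fin (n + 1) → ℝ := fun i => sSup (S i) with hℓ
  have hmem : ∀ i, ℓ i ∈ S i := fun i => (hSc i).csSup_mem (hSne i) (hbdd i)
  have hℓ0 : ∀ i, 0 ≤ ℓ i := fun i => (hmem i).1.1
  have hℓL : ∀ i, ℓ i ≤ L := fun i => (hmem i).1.2
  have hfℓ : ∀ i, f (ℓ i) = sites i := fun i => (hmem i).2
  set σ : Equiv.Perm (Fin (n + 1)) := Tuple.sort ℓ with hσdef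
  have hsort : Monotone (ℓ ∘ σ) := Tuple.monotone_sort ℓ
  set k : Fin (n + 1) := σ 0 with hk
  set a : ℝ := ℓ k with ha
  have hamin : ∀ i, a ≤ ℓ i := by
    intro i
    have := hsort (Fin.zero_le (σ.symm i))
    simpa using this
  have ha0 : 0 ≤ a := hℓ0 k
  have haL : a ≤ L := hℓL k
  -- the return visit ν
  have hν : ∃ ν : ℝ, f ν = sites k ∧ L ≤ ν ∧ ν ≤ a + L := by
    by_cases hA : ∃ u, f u = sites k ∧ a < u ∧ u ≤ a + L
    · obtain ⟨u, hfu, hau, huL⟩ := hA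
      refine ⟨u, hfu, ?_, huL⟩
      by_contra hcon
      push_neg at hcon
      have hu : u ∈ S k := ⟨⟨le_trans ha0 hau.le, hcon.le⟩, hfu⟩
      exact absurd (le_csSup (hbdd k) hu) (not_le.mpr hau)
    · push_neg at hA
      have key : ∀ m : ℕ, dist (f (a + L)) (sites k) ≤ 1 / (m + 1) := by
        intro m
        have hm : (0 : ℝ) < 1 / (m + 1) := by positivity
        obtain ⟨u, hu, hfu⟩ := hvis k (a + 1 / (m + 1)) (by linarith)
        have hau : a < u := by have := hu.1; linarith
        have h2 : a + L < u := hA u hfu hau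
        calc dist (f (a + L)) (sites k) = dist (f (a + L)) (f u) := by rw [hfu]
          _ ≤ |a + L - u| := hdist _ _
          _ = u - (a + L) := by rw [abs_sub_comm]; exact abs_of_nonneg (by linarith)
          _ ≤ 1 / (m + 1) := by have := hu.2; linarith
      have hd0 : dist (f (a + L)) (sites k) ≤ 0 := by
        by_contra hcon
        push_neg at hcon
        obtain ⟨m, hm⟩ := exists_nat_one_div_lt hcon
        exact absurd (key m) (not_le.mpr hm)
      exact ⟨a + L, dist_le_zero.mp hd0, by linarith, le_refl _⟩
  obtain ⟨ν, hνk, hLν, hνaL⟩ := hν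
  refine ⟨σ, ?_⟩
  set u : ℕ → ℝ := fun j => if h : j < n + 1 then ℓ (σ ⟨j, h⟩) else ν with hu
  have hmk : ∀ (j : ℕ) (h : j < n + 1), ((j : ℕ) : Fin (n + 1)) = ⟨j, h⟩ := by
    intro j h
    ext
    simp [Fin.val_natCast, Nat.mod_eq_of_lt h]
  have hterm : ∀ j : ℕ, (hj : j < n + 1) →
      dist (sites (σ ((j : ℕ) : Fin (n + 1)))) (sites (σ (((j : ℕ) : Fin (n + 1)) + 1)))
        ≤ u (j + 1) - u j := by
    intro j hj
    have huj : u j = ℓ (σ ⟨j, hj⟩) := dif_pos hj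
    rcases lt_or_eq_of_le (Nat.lt_succ_iff.mp hj) with hjn | hjn
    · -- j < n
      have hj1 : j + 1 < n + 1 := by omega
      have huj1 : u (j + 1) = ℓ (σ ⟨j + 1, hj1⟩) := dif_pos hj1
      have hc1 : (((j : ℕ) : Fin (n + 1)) + 1) = (⟨j + 1, hj1⟩ : Fin (n + 1)) := by
        rw [← Nat.cast_add_one, hmk (j + 1) hj1]
      have hle : ℓ (σ ⟨j, hj⟩) ≤ ℓ (σ ⟨j + 1, hj1⟩) := by
        have : (⟨j, hj⟩ : Fin (n + 1)) ≤ ⟨j + 1, hj1⟩ := by simp [Fin.mk_le_mk]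
        exact hsort this
      rw [hc1, hmk j hj, huj, huj1, ← hfℓ (σ ⟨j, hj⟩), ← hfℓ (σ ⟨j + 1, hj1⟩)]
      calc dist (f (ℓ (σ ⟨j, hj⟩))) (f (ℓ (σ ⟨j + 1, hj1⟩)))
          ≤ |ℓ (σ ⟨j, hj⟩) - ℓ (σ ⟨j + 1, hj1⟩)| := hdist _ _
        _ = ℓ (σ ⟨j + 1, hj1⟩) - ℓ (σ ⟨j, hj⟩) := by
            rw [abs_sub_comm]; exact abs_of_nonneg (by linarith)
    · -- j = n
      subst hjn
      have huj1 : u (j + 1) = ν := dif_neg (by omega)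
      have hc0 : (((j : ℕ) : Fin (j + 1)) + 1) = (0 : Fin (j + 1)) := by
        rw [← Nat.cast_add_one]
        exact Fin.natCast_self (j + 1)
      rw [hc0, hmk j hj, huj, huj1]
      have hℓν : ℓ (σ ⟨j, hj⟩) ≤ ν := le_trans (hℓL _) hLν
      calc dist (sites (σ ⟨j, hj⟩)) (sites (σ 0))
          = dist (f (ℓ (σ ⟨j, hj⟩))) (f ν) := by rw [hfℓ, ← hk, hνk]
        _ ≤ |ℓ (σ ⟨j, hj⟩) - ν| := hdist _ _
        _ = ν - ℓ (σ ⟨j, hj⟩) := by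
            rw [abs_sub_comm]; exact abs_of_nonneg (by linarith)
  calc ∑ i : Fin (n + 1), dist (sites (σ i)) (sites (σ (i + 1)))
      = ∑ i : Fin (n + 1), (fun j : ℕ =>
          dist (sites (σ ((j : ℕ) : Fin (n + 1)))) (sites (σ (((j : ℕ) : Fin (n + 1)) + 1)))) (i : ℕ) := by
        apply Finset.sum_congr rfl
        intro i _
        simp only [Fin.cast_val_eq_self]
    _ = ∑ j ∈ range (n + 1), (fun j : ℕ =>
          dist (sites (σ ((j : ℕ) : Fin (n + 1)))) (sites (σ (((j : ℕ) : Fin (n + 1)) + 1)))) j :=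
        by exact Fin.sum_univ_eq_sum_range (fun j : ℕ =>
          dist (sites (σ ((j : ℕ) : Fin (n + 1)))) (sites (σ (((j : ℕ) : Fin (n + 1)) + 1)))) (n + 1)
    _ ≤ ∑ j ∈ range (n + 1), (u (j + 1) - u j) := by
        apply Finset.sum_le_sum
        intro j hj
        exact hterm j (mem_range.mp hj)
    _ = u (n + 1) - u 0 := Finset.sum_range_sub u (n + 1)
    _ ≤ L := by
        have h1 : u (n + 1) = ν := dif_neg (by omega)
        have h2 : u 0 = ℓ (σ ⟨0, Nat.succ_pos n⟩) := dif_pos (Nat.succ_pos n)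
        have h3 : (⟨0, Nat.succ_pos n⟩ : Fin (n + 1)) = 0 := rfl
        rw [h1, h2, h3, ← hk, ← ha]
        linarith

open Fin.NatCast in
lemma back_dir {X : Type*} [MetricSpace X] (n : ℕ) (sites : Fin (n + 1) → X)
    (L : ℝ) (hL : 0 ≤ L)
    (hgeo : ∀ x y : X, ∃ g : ℝ → X, LipschitzWith 1 g ∧ g 0 = x ∧ g (dist x y) = y)
    (σ : Equiv.Perm (Fin (n + 1)))
    (hσ : ∑ i : Fin (n + 1), dist (sites (σ i)) (sites (σ (i + 1))) ≤ L) :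
    ∃ f : ℝ → X, LipschitzWith 1 f ∧
      ∀ (i : Fin (n + 1)) (t : ℝ), 0 ≤ t → ∃ u ∈ Set.Icc t (t + L), f u = sites i := by
  set p : ℕ → X := fun j => sites (σ (j : Fin (n + 1))) with hp
  set D : ℝ := ∑ i : Fin (n + 1), dist (sites (σ i)) (sites (σ (i + 1))) with hDdef
  have hD0 : 0 ≤ D := Finset.sum_nonneg fun _ _ => dist_nonneg
  set e : ℕ → ℝ := fun j => dist (p j) (p (j + 1)) with he
  set c : ℕ → ℝ := fun j => ∑ m ∈ range j, e m with hc
  have hcsucc : ∀ j, c (j + 1) = c j + e j := fun j => sum_range_succ e j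
  have hmono : Monotone c := monotone_nat_of_le_succ fun j => by
    rw [hcsucc]; have := dist_nonneg (x := p j) (y := p (j + 1)); simp [he]
  have hcast : ∀ j : ℕ, ((j + 1 : ℕ) : Fin (n + 1)) = (j : Fin (n + 1)) + 1 :=
    fun j => Nat.cast_add_one j
  have hper : ∀ j : ℕ, p (j + (n + 1)) = p j := by
    intro j
    simp only [hp]
    congr 1
    push_cast
    simp
  have heper : ∀ j : ℕ, e (j + (n + 1)) = e j := by
    intro j
    simp only [he]
    rw [hper j, show j + (n + 1) + 1 = (j + 1) + (n + 1) by omega, hper (j + 1)]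
  have hedge : ∀ j : ℕ, e j = dist (sites (σ (j : Fin (n + 1)))) (sites (σ ((j : Fin (n + 1)) + 1))) := by
    intro j
    simp only [he, hp, hcast j]
  have hcD : c (n + 1) = D := by
    rw [hDdef, hc]
    rw [show (∑ i : Fin (n + 1), dist (sites (σ i)) (sites (σ (i + 1)))) =
      ∑ i : Fin (n + 1), (fun j : ℕ => e j) (i : ℕ) from ?_]
    · rw [Fin.sum_univ_eq_sum_range (fun j : ℕ => e j) (n + 1)]
    · apply Finset.sum_congr rfl
      intro i _
      show dist (sites (σ i)) (sites (σ (i + 1))) = e (i : ℕ)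
      rw [hedge (i : ℕ), Fin.cast_val_eq_self]
  have hshift : ∀ j : ℕ, c (j + (n + 1)) = c j + D := by
    intro j
    induction j with
    | zero => simpa [hc] using hcD
    | succ j ih =>
      rw [show j + 1 + (n + 1) = (j + (n + 1)) + 1 by omega, hcsucc, ih, heper, hcsucc]
      ring
  rcases eq_or_lt_of_le hD0 with hDz | hDpos
  · -- D = 0 : all sites equal, constant schedule
    have hz : ∀ i ∈ (univ : Finset (Fin (n + 1))),
        dist (sites (σ i)) (sites (σ (i + 1))) = 0 := by
      rw [← Finset.sum_eq_zero_iff_of_nonneg fun i _ => dist_nonneg]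
      exact hDz.symm ▸ hDdef.symm
    have hpc : ∀ j : ℕ, p j = p 0 := by
      intro j
      induction j with
      | zero => rfl
      | succ j ih =>
        have h0 : dist (p j) (p (j + 1)) = 0 := by
          have h1 : e j = 0 := by rw [hedge j]; exact hz _ (mem_univ _)
          simpa [he] using h1
        rw [← ih]
        exact (dist_eq_zero.mp h0).symm
    have hsites : ∀ i : Fin (n + 1), sites i = p 0 := by
      intro i
      have : sites i = p ((σ.symm i : Fin (n + 1)) : ℕ) := by
        simp only [hp, Fin.cast_val_eq_self, Equiv.apply_symm_apply]
      rw [this, hpc]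
    refine ⟨fun _ => p 0, (LipschitzWith.const (p 0)).weaken (zero_le_one), ?_⟩
    intro i t ht
    exact ⟨t, ⟨le_refl t, by linarith⟩, (hsites i).symm⟩
  · -- D > 0
    have hmul : ∀ k : ℕ, c (k * (n + 1)) = k * D := by
      intro k
      induction k with
      | zero => simp [hc]
      | succ k ih =>
        rw [show (k + 1) * (n + 1) = k * (n + 1) + (n + 1) by ring, hshift, ih]
        push_cast; ring
    have hub : ∀ t : ℝ, ∃ m : ℕ, t < c m := by
      intro t
      obtain ⟨k, hk⟩ := exists_nat_gt (t / D)
      refine ⟨k * (n + 1), ?_⟩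
      rw [hmul]
      calc t = (t / D) * D := by field_simp
        _ < k * D := by exact mul_lt_mul_of_pos_right hk hDpos
    obtain ⟨F, hF1, hF2⟩ := glue_path hgeo p hub
    refine ⟨F, hF1, ?_⟩
    intro i t ht
    set q : ℕ := ((σ.symm i : Fin (n + 1)) : ℕ) with hq
    have hpq : p q = sites i := by
      simp only [hp, hq, Fin.cast_val_eq_self, Equiv.apply_symm_apply]
    have hqshift : ∀ k : ℕ, c (q + k * (n + 1)) = c q + k * D := by
      intro k
      induction k with
      | zero => simp
      | succ k ih =>
        rw [show q + (k + 1) * (n + 1) = (q + k * (n + 1)) + (n + 1) by ring, hshift, ih]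
        push_cast; ring
    have hpshift : ∀ k : ℕ, p (q + k * (n + 1)) = p q := by
      intro k
      induction k with
      | zero => simp
      | succ k ih =>
        rw [show q + (k + 1) * (n + 1) = (q + k * (n + 1)) + (n + 1) by ring, hper, ih]
    have hex : ∃ k : ℕ, t ≤ c q + k * D := by
      obtain ⟨k, hk⟩ := exists_nat_gt ((t - c q) / D)
      refine ⟨k, ?_⟩
      have : (t - c q) / D * D < k * D := mul_lt_mul_of_pos_right hk hDpos
      rw [div_mul_cancel₀ _ (ne_of_gt hDpos)] at this
      linarith
    set k := Nat.find hex with hkdef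
    have hk1 : t ≤ c q + k * D := Nat.find_spec hex
    have hk2 : c q + (k : ℝ) * D ≤ t + L := by
      rcases Nat.eq_zero_or_pos k with h0 | h0
      · rw [h0]
        push_cast
        have hq1 : c q ≤ c (n + 1) := hmono (by omega)
        rw [hcD] at hq1
        linarith
      · have hmin : ¬ t ≤ c q + (↑(k - 1) : ℝ) * D := Nat.find_min hex (by omega)
        push_neg at hmin
        have : ((k - 1 : ℕ) : ℝ) = (k : ℝ) - 1 := by
          have : (1 : ℕ) ≤ k := h0
          push_cast [this]
          ring
        rw [this] at hmin
        have hDL : D ≤ L := hσ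
        nlinarith
    refine ⟨c (q + k * (n + 1)), ⟨?_, ?_⟩, ?_⟩
    · rw [hqshift]; exact hk1
    · rw [hqshift]; exact hk2
    · rw [hF2, hpshift, hpq]

/-- For a single unit-speed robot in a metric space in which any two points can
be joined by a unit-speed path, there is a patrol schedule (a 1-Lipschitz
trajectory such that every site is visited in every time window of length `L`
from time `0` on) of latency at most `L` for the sites `sites 0, …, sites n`
if and only if there is a closed tour (a cyclic ordering of the sites) of total
length at most `L`. -/
theorem stmt_10 {X : Type*} [MetricSpace X] (n : ℕ) (sites : Fin (n + 1) → X)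
    (L : ℝ) (hL : 0 ≤ L)
    (hgeo : ∀ x y : X, ∃ g : ℝ → X, LipschitzWith 1 g ∧ g 0 = x ∧ g (dist x y) = y) :
    (∃ f : ℝ → X, LipschitzWith 1 f ∧
        ∀ (i : Fin (n + 1)) (t : ℝ), 0 ≤ t → ∃ u ∈ Set.Icc t (t + L), f u = sites i) ↔
    (∃ σ : Equiv.Perm (Fin (n + 1)),
        ∑ i : Fin (n + 1), dist (sites (σ i)) (sites (σ (i + 1))) ≤ L) := by
  constructor
  · rintro ⟨f, hf, hvis⟩
    exact fwd_dir n sites L hL f hf hvis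
  · rintro ⟨σ, hσ⟩
    exact back_dir n sites L hL hgeo σ hσ
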